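/- arXiv:2301.03776 — 3 statements merged into one kernel-verified Lean document; each statement's English description precedes it below -/
import Mathlib

section
/- Let M be a matroid and let R be a round flat of M. Then the tree-width of M is at least r(R). -/
open Set

namespace Matroid

variable {α : Type*} {β : Type*}

/-- The rank of a set in a matroid: the supremum of sizes of independent subsets. -/
noncomputable def mRank (M : Matroid α) (X : Set α) : ℕ :=
  sSup {n : ℕ | ∃ I, M.Indep I ∧ I ⊆ X ∧ I.ncard = n}

/-- The rank of a matroid. -/
noncomputable def mRk (M : Matroid α) : ℕ := M.mRank M.E

/-- A flat `F` is modular if `r F + r F' = r (F ∪ F') + r (F ∩ F')` for every flat `F'`. -/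
def IsModularFlat (M : Matroid α) (F : Set α) : Prop :=
  M.IsFlat F ∧ ∀ F', M.IsFlat F' →
    M.mRank F + M.mRank F' = M.mRank (F ∪ F') + M.mRank (F ∩ F')

/-- A proper flat is a flat other than the ground set. -/
def IsProperFlat (M : Matroid α) (F : Set α) : Prop := M.IsFlat F ∧ F ≠ M.E

/-- A vertical cover is a pair of proper flats whose union is the ground set. -/
def VerticalCover (M : Matroid α) (F F' : Set α) : Prop :=
  M.IsProperFlat F ∧ M.IsProperFlat F' ∧ F ∪ F' = M.E

/-- A modular cover is a vertical cover by two modular flats. -/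
def ModularCover (M : Matroid α) (F F' : Set α) : Prop :=
  M.VerticalCover F F' ∧ M.IsModularFlat F ∧ M.IsModularFlat F'

/-- A matroid is round if it has no vertical cover. -/
def Round (M : Matroid α) : Prop := ∀ F F', ¬ M.VerticalCover F F'

/-- A subset of the ground set is round if the restriction to it is round. -/
def RoundSet (M : Matroid α) (X : Set α) : Prop := X ⊆ M.E ∧ (M ↾ X).Round

/-- A rotunda is a maximal round flat. -/
def Rotunda (M : Matroid α) (R : Set α) : Prop :=
  M.IsFlat R ∧ M.RoundSet R ∧ ∀ R', M.IsFlat R' → M.RoundSet R' → R ⊆ R' → R' = R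

/-- A matroid of rank `r` is supersolvable if there is a chain of modular flats
`F 0 ⊆ F 1 ⊆ ⋯ ⊆ F r` with `r (F i) = i` for each `i`. -/
def Supersolvable (M : Matroid α) : Prop :=
  ∃ F : ℕ → Set α, (∀ i ≤ M.mRk, M.IsModularFlat (F i) ∧ M.mRank (F i) = i) ∧
    ∀ i < M.mRk, F i ⊆ F (i + 1)

/-- A matroid is saturated if every round flat is modular. -/
def Saturated (M : Matroid α) : Prop :=
  ∀ F, M.IsFlat F → M.RoundSet F → M.IsModularFlat F

/-- A circuit: a minimal dependent subset of the ground set. -/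
def Circ (M : Matroid α) (C : Set α) : Prop :=
  C ⊆ M.E ∧ ¬ M.Indep C ∧ ∀ D ⊂ C, M.Indep D

/-- A matroid is connected if it is non-empty and every two distinct elements lie in a
common circuit. -/
def ConnectedM (M : Matroid α) : Prop :=
  M.E.Nonempty ∧ ∀ x ∈ M.E, ∀ y ∈ M.E, x = y ∨ ∃ C, M.Circ C ∧ x ∈ C ∧ y ∈ C

/-- A hyperplane: a flat of rank `r M - 1`. -/
def IsHyperplane (M : Matroid α) (H : Set α) : Prop :=
  M.IsFlat H ∧ M.mRank H + 1 = M.mRk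

/-- The union of the projections `P_H(x, y) = H ∩ cl (x ∪ y)` onto the modular hyperplane `H`,
taken over all pairs of distinct rank-one flats `x = cl {a}`, `y = cl {b}` spanned by
elements `a, b` of `X`. -/
def projUnion (M : Matroid α) (H X : Set α) : Set α :=
  ⋃ a ∈ X, ⋃ b ∈ X, ⋃ (_ : M.closure {a} ≠ M.closure {b}), H ∩ M.closure {a, b}

/-- Two elements are related if they are equal or lie in a common circuit; the connected
components of a matroid are the restrictions to the equivalence classes of this relation. -/
def connRel (M : Matroid α) (x y : α) : Prop :=
  x = y ∨ ∃ C, M.Circ C ∧ x ∈ C ∧ y ∈ C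

/-- The rotunda graph of a matroid: vertices are the rotunda; two rotunda are adjacent if
they intersect and there is a modular cover separating them at their intersection. -/
def rotundaGraph (M : Matroid α) : SimpleGraph {R : Set α // M.Rotunda R} where
  Adj R₁ R₂ := R₁ ≠ R₂ ∧ (R₁.1 ∩ R₂.1).Nonempty ∧
    ∃ F₁ F₂, M.ModularCover F₁ F₂ ∧ R₁.1 ⊆ F₁ ∧ R₂.1 ⊆ F₂ ∧ F₁ ∩ F₂ = R₁.1 ∩ R₂.1
  symm := ⟨by
    rintro a b ⟨hne, hint, F₁, F₂, ⟨⟨hp1, hp2, hu⟩, hm1, hm2⟩, h1, h2, hi⟩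
    refine ⟨hne.symm, by rwa [Set.inter_comm], F₂, F₁,
      ⟨⟨hp2, hp1, by rwa [Set.union_comm]⟩, hm2, hm1⟩, h2, h1, ?_⟩
    rw [Set.inter_comm, hi, Set.inter_comm]⟩
  loopless := ⟨fun a h => h.1 rfl⟩

/-- A rotunda tree of `M`: a tree on the rotunda of `M` such that for each element `x` of the
ground set, the rotunda containing `x` induce a (nonempty) subtree. -/
def IsRotundaTree (M : Matroid α) (T : SimpleGraph {R : Set α // M.Rotunda R}) : Prop :=
  T.IsTree ∧ ∀ x ∈ M.E, (T.induce {t : {R : Set α // M.Rotunda R} | x ∈ t.1}).Connected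

/-- A legitimate weighting of `M`: zero on the empty set, and strictly monotone under proper
inclusion on the set consisting of `∅` and the pairwise intersections of distinct rotunda. -/
def LegitimateWeighting (M : Matroid α) (σ : Set α → ℕ) : Prop :=
  σ ∅ = 0 ∧
  ∀ X X' : Set α,
    (X = ∅ ∨ ∃ R R', M.Rotunda R ∧ M.Rotunda R' ∧ R ≠ R' ∧ X = R ∩ R') →
    (X' = ∅ ∨ ∃ R R', M.Rotunda R ∧ M.Rotunda R' ∧ R ≠ R' ∧ X' = R ∩ R') →
    X ⊂ X' → σ X < σ X'

/-- The total weight of a graph on the rotunda of `M`, where the edge joining rotunda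
`R` and `R'` gets weight `σ (R ∩ R')`. -/
noncomputable def treeWeight {M : Matroid α} (σ : Set α → ℕ)
    (T : SimpleGraph {R : Set α // M.Rotunda R}) : ℕ :=
  ∑ᶠ e ∈ T.edgeSet,
    Sym2.lift ⟨fun a b => σ (a.1 ∩ b.1), fun a b => by simp [Set.inter_comm]⟩ e

/-- A tree-decomposition of a matroid: a tree together with bags covering the ground set. -/
def IsTreeDecomp (M : Matroid α) (T : SimpleGraph β) (τ : β → Set α) : Prop :=
  T.IsTree ∧ ∀ x ∈ M.E, ∃ t, x ∈ τ t

/-- The node-width of a node `t` in a tree-decomposition `(T, τ)` of `M`: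
`(Σ_i r (τ t ∪ ⋃_{k ≠ i} F_k)) − (d − 1) · r M`, where `F_1, …, F_d` are the unions of the
bags over the connected components of `T − t`. -/
noncomputable def nodeWidth (M : Matroid α) (T : SimpleGraph β) (τ : β → Set α) (t : β) : ℤ :=
  (∑ᶠ c : (T.induce {s : β | s ≠ t}).ConnectedComponent,
      (M.mRank (τ t ∪ ⋃ (s : {s : β // s ≠ t})
        (_ : (T.induce {s : β | s ≠ t}).connectedComponentMk s ≠ c), τ s.1) : ℤ))
    - ((Nat.card (T.induce {s : β | s ≠ t}).ConnectedComponent : ℤ) - 1) * (M.mRk : ℤ)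

/-- The width of a tree-decomposition: the maximum node-width. -/
noncomputable def decompWidth (M : Matroid α) (T : SimpleGraph β) (τ : β → Set α) : ℤ :=
  sSup (Set.range (M.nodeWidth T τ))

/-- The tree-width of a matroid: the minimum width of a (finite) tree-decomposition. -/
noncomputable def treeWidth (M : Matroid α) : ℕ :=
  sInf {n : ℕ | ∃ (β : Type) (T : SimpleGraph β) (τ : β → Set α),
    Finite β ∧ M.IsTreeDecomp T τ ∧ ∀ t, M.nodeWidth T τ t ≤ (n : ℤ)}

end Matroid

namespace SimpleGraph

/-- A graph is chordal if every cycle with at least four edges has a chord: an edge of the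
graph joining two vertices of the cycle that is not an edge of the cycle. -/
def IsChordal {V : Type*} (G : SimpleGraph V) : Prop :=
  ∀ ⦃v : V⦄ (w : G.Walk v v), w.IsCycle → 4 ≤ w.length →
    ∃ x y, x ∈ w.support ∧ y ∈ w.support ∧ G.Adj x y ∧ s(x, y) ∉ w.edges

/-- A maximal clique of a graph. -/
def MaxClique {V : Type*} (G : SimpleGraph V) (C : Set V) : Prop :=
  G.IsClique C ∧ ∀ D, G.IsClique D → C ⊆ D → D = C

/-- The reduced clique graph of a graph: vertices are the maximal cliques; two maximal
cliques are adjacent if they intersect and every walk from one side to the other passes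
through their intersection. -/
def reducedCliqueGraph {V : Type*} (G : SimpleGraph V) :
    SimpleGraph {C : Set V // G.MaxClique C} where
  Adj C₁ C₂ := C₁ ≠ C₂ ∧ (C₁.1 ∩ C₂.1).Nonempty ∧
    ∀ u ∈ C₁.1 \ C₂.1, ∀ v ∈ C₂.1 \ C₁.1, ∀ p : G.Walk u v,
      ∃ z ∈ p.support, z ∈ C₁.1 ∩ C₂.1
  symm := ⟨by
    rintro a b ⟨hne, hint, hsep⟩
    refine ⟨hne.symm, by rwa [Set.inter_comm], fun u hu v hv p => ?_⟩
    obtain ⟨z, hz, hz2⟩ := hsep v hv u hu p.reverse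
    refine ⟨z, ?_, by rwa [Set.inter_comm]⟩
    simpa [SimpleGraph.Walk.support_reverse] using hz⟩
  loopless := ⟨fun a h => h.1 rfl⟩

end SimpleGraph

open Matroid

section RankAux

namespace Matroid

variable {α : Type*} {M : Matroid α} {I J X Y R : Set α}

private lemma mRank_bddAbove (M : Matroid α) [M.Finite] (X : Set α) :
    BddAbove {n : ℕ | ∃ I, M.Indep I ∧ I ⊆ X ∧ I.ncard = n} := by
  refine ⟨M.E.ncard, ?_⟩
  rintro n ⟨I, hI, -, rfl⟩
  exact Set.ncard_le_ncard hI.subset_ground M.ground_finite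

private lemma mRank_nonempty (M : Matroid α) (X : Set α) :
    {n : ℕ | ∃ I, M.Indep I ∧ I ⊆ X ∧ I.ncard = n}.Nonempty :=
  ⟨0, ∅, M.empty_indep, Set.empty_subset X, by simp⟩

lemma ncard_le_mRank [M.Finite] (hI : M.Indep I) (hIX : I ⊆ X) : I.ncard ≤ M.mRank X :=
  le_csSup (mRank_bddAbove M X) ⟨I, hI, hIX, rfl⟩

lemma IsBasis'.mRank_eq [M.Finite] (hI : M.IsBasis' I X) : M.mRank X = I.ncard := by
  refine le_antisymm (csSup_le (mRank_nonempty M X) ?_) (ncard_le_mRank hI.indep hI.subset)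
  rintro n ⟨J, hJ, hJX, rfl⟩
  obtain ⟨J', hJ', hJJ'⟩ := hJ.subset_isBasis'_of_subset hJX
  have hfin : J'.Finite := M.ground_finite.subset hJ'.indep.subset_ground
  have hcard : J'.ncard = I.ncard := by
    rw [Set.ncard_def, hJ'.encard_eq_encard hI, ← Set.ncard_def]
  exact hcard ▸ Set.ncard_le_ncard hJJ' hfin

lemma mRank_mono (M : Matroid α) [M.Finite] (h : X ⊆ Y) : M.mRank X ≤ M.mRank Y :=
  csSup_le_csSup (mRank_bddAbove M Y) (mRank_nonempty M X)
    (by rintro n ⟨I, hI, hIX, rfl⟩; exact ⟨I, hI, hIX.trans h, rfl⟩)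

lemma mRank_closure_eq (M : Matroid α) [M.Finite] (X : Set α) :
    M.mRank (M.closure X) = M.mRank X := by
  obtain ⟨I, hI⟩ := M.exists_isBasis' X
  rw [hI.mRank_eq, hI.isBasis_closure_right.isBasis'.mRank_eq]

lemma mRank_inter_ground (M : Matroid α) (X : Set α) : M.mRank (X ∩ M.E) = M.mRank X := by
  unfold mRank
  congr 1
  ext n
  constructor
  · rintro ⟨I, hI, hIX, rfl⟩
    exact ⟨I, hI, hIX.trans Set.inter_subset_left, rfl⟩
  · rintro ⟨I, hI, hIX, rfl⟩
    exact ⟨I, hI, Set.subset_inter hIX hI.subset_ground, rfl⟩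

lemma mRank_le_mRk (M : Matroid α) [M.Finite] (X : Set α) : M.mRank X ≤ M.mRk := by
  rw [← mRank_inter_ground]
  exact M.mRank_mono Set.inter_subset_right

lemma mRank_eq_mRk_of_ground_subset [M.Finite] (h : M.E ⊆ X) : M.mRank X = M.mRk :=
  le_antisymm (mRank_le_mRk M X) (M.mRank_mono h)

lemma mRank_submod (M : Matroid α) [M.Finite] (X Y : Set α) :
    M.mRank (X ∪ Y) + M.mRank (X ∩ Y) ≤ M.mRank X + M.mRank Y := by
  obtain ⟨I, hI⟩ := M.exists_isBasis' (X ∩ Y)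
  obtain ⟨J, hJ, hIJ⟩ := hI.indep.subset_isBasis'_of_subset
    (hI.subset.trans (Set.inter_subset_left.trans Set.subset_union_left))
  have hJfin : J.Finite := M.ground_finite.subset hJ.indep.subset_ground
  have h1 : (J ∩ X).ncard ≤ M.mRank X :=
    ncard_le_mRank (hJ.indep.subset Set.inter_subset_left) Set.inter_subset_right
  have h2 : (J ∩ Y).ncard ≤ M.mRank Y :=
    ncard_le_mRank (hJ.indep.subset Set.inter_subset_left) Set.inter_subset_right
  have hu : (J ∩ X) ∪ (J ∩ Y) = J := by
    rw [← Set.inter_union_distrib_left]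
    exact Set.inter_eq_self_of_subset_left hJ.subset
  have hi : (J ∩ X) ∩ (J ∩ Y) = J ∩ (X ∩ Y) := by
    rw [Set.inter_inter_inter_comm, Set.inter_self]
  have hcards := Set.ncard_union_add_ncard_inter (J ∩ X) (J ∩ Y)
    (hJfin.subset Set.inter_subset_left) (hJfin.subset Set.inter_subset_left)
  rw [hu, hi] at hcards
  have hIle : I.ncard ≤ (J ∩ (X ∩ Y)).ncard :=
    Set.ncard_le_ncard (Set.subset_inter hIJ hI.subset) (hJfin.subset Set.inter_subset_left)
  rw [hJ.mRank_eq, hI.mRank_eq]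
  omega

lemma aux_sum {ι : Type*} (M : Matroid α) [M.Finite] (A : ι → Set α) (S : Finset ι) :
    (∀ i ∈ S, ∀ j ∈ S, i ≠ j → M.E ⊆ A i ∪ A j) →
    S.card * M.mRk + M.mRank (⋂ i ∈ S, M.closure (A i)) ≤ (∑ i ∈ S, M.mRank (A i)) + M.mRk := by
  classical
  induction S using Finset.cons_induction with
  | empty =>
    intro _
    simp only [Finset.card_empty, Finset.sum_empty, zero_mul, zero_add, Finset.notMem_empty,
      Set.iInter_of_empty, Set.iInter_univ]
    exact mRank_le_mRk M Set.univ
  | cons j S' hj ih =>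
    intro hsp
    have hjS : j ∈ Finset.cons j S' hj := Finset.mem_cons_self j S'
    have hD : ⋂ i ∈ Finset.cons j S' hj, M.closure (A i)
        = M.closure (A j) ∩ ⋂ i ∈ S', M.closure (A i) := by
      rw [Finset.cons_eq_insert, Finset.set_biInter_insert]
    set D' := ⋂ i ∈ S', M.closure (A i) with hD'
    have hground : M.mRank (M.closure (A j) ∪ D') = M.mRk := by
      apply mRank_eq_mRk_of_ground_subset
      intro e he
      by_cases hej : e ∈ M.closure (A j)
      · exact Or.inl hej
      · refine Or.inr (Set.mem_iInter₂.mpr fun i hi => ?_)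
        have hne : j ≠ i := fun h => hj (h ▸ hi)
        rcases hsp j hjS i (Finset.mem_cons_of_mem hi) hne he with h | h
        · exact absurd (M.mem_closure_of_mem' h he) hej
        · exact M.mem_closure_of_mem' h he
    have hsub := M.mRank_submod (M.closure (A j)) D'
    rw [hground, mRank_closure_eq] at hsub
    have hih := ih fun i hi k hk hik =>
      hsp i (Finset.mem_cons_of_mem hi) k (Finset.mem_cons_of_mem hk) hik
    rw [Finset.card_cons, Finset.sum_cons, hD, add_one_mul]
    linarith [hsub, hih]

lemma closure_flat' (M : Matroid α) (X : Set α) : M.IsFlat (M.closure X) := by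
  rw [closure_def]
  have hne : {F | M.IsFlat F ∧ X ∩ M.E ⊆ F}.Nonempty := ⟨M.E, M.ground_isFlat, Set.inter_subset_right⟩
  rw [Set.sInter_eq_iInter]
  haveI := hne.coe_sort
  exact IsFlat.iInter fun F => F.2.1

/-- The key consequence of roundness: if `R` is covered by `U ∪ V`, then `R` lies in the
closure of `U` or in the closure of `V`. -/
lemma round_cover {M : Matroid α} {R U V : Set α} (hR : M.RoundSet R) (hUV : R ⊆ U ∪ V) :
    R ⊆ M.closure U ∨ R ⊆ M.closure V := by
  set N := M ↾ R with hN
  have hground : N.E = R := rfl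
  have key : ∀ W : Set α, N.closure (W ∩ R) = R → R ⊆ M.closure W := by
    intro W hW
    obtain ⟨I, hI⟩ := N.exists_isBasis (W ∩ R) (by rw [hground]; exact Set.inter_subset_right)
    have hIR : I ⊆ R := hI.subset.trans Set.inter_subset_right
    have h1 : R ⊆ N.closure I := by rw [hI.closure_eq_closure, hW]
    have h2 : N.closure I ⊆ M.closure I := by
      intro e he
      have heR : e ∈ R := N.closure_subset_ground I he
      have heE : e ∈ M.E := hR.1 heR
      rw [hI.indep.mem_closure_iff'] at he
      rw [(hI.indep.of_restrict).mem_closure_iff']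
      exact ⟨heE, fun h => he.2 (restrict_indep_iff.mpr
        ⟨h, Set.insert_subset heR hIR⟩)⟩
    exact h1.trans (h2.trans
      (M.closure_subset_closure (hI.subset.trans Set.inter_subset_left)))
  have hcover : N.closure (U ∩ R) ∪ N.closure (V ∩ R) = N.E := by
    apply subset_antisymm
      (Set.union_subset (N.closure_subset_ground _) (N.closure_subset_ground _))
    intro x hx
    rcases hUV hx with h | h
    · exact Or.inl (N.subset_closure (U ∩ R)
        (by rw [hground]; exact Set.inter_subset_right) ⟨h, hx⟩)
    · exact Or.inr (N.subset_closure (V ∩ R)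
        (by rw [hground]; exact Set.inter_subset_right) ⟨h, hx⟩)
  by_contra hcon
  push_neg at hcon
  refine hR.2 (N.closure (U ∩ R)) (N.closure (V ∩ R))
    ⟨⟨N.closure_flat' _, fun h => hcon.1 (key U (by rw [← hground]; exact h))⟩,
     ⟨N.closure_flat' _, fun h => hcon.2 (key V (by rw [← hground]; exact h))⟩, hcover⟩

end Matroid

end RankAux

section GraphAux

open SimpleGraph

variable {β : Type*}

lemma reach_of_walk (T : SimpleGraph β) (t : β) :
    ∀ {a b : β} (p : T.Walk a b), t ∉ p.support → ∀ (ha : a ≠ t) (hb : b ≠ t),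
      (T.induce {s : β | s ≠ t}).Reachable ⟨a, ha⟩ ⟨b, hb⟩ := by
  intro a b p
  induction p with
  | nil =>
    intro _ ha hb
    exact Reachable.refl _
  | @cons a u b h q ih =>
    intro hsup ha hb
    rw [Walk.support_cons] at hsup
    have hq : t ∉ q.support := fun h' => hsup (List.mem_cons_of_mem _ h')
    have hu : u ≠ t := fun h' => hq (h' ▸ q.start_mem_support)
    have hadj : (T.induce {s : β | s ≠ t}).Adj ⟨a, ha⟩ ⟨u, hu⟩ := h
    exact (hadj.reachable).trans (ih hq hu hb)

lemma walk_of_reach (T : SimpleGraph β) (t : β) {x y : {s : β | s ≠ t}}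
    (h : (T.induce {s : β | s ≠ t}).Reachable x y) :
    ∃ p : T.Walk x.1 y.1, t ∉ p.support := by
  obtain ⟨w⟩ := h
  induction w with
  | @nil a =>
    refine ⟨Walk.nil, ?_⟩
    simp only [Walk.support_nil, List.mem_singleton]
    exact fun h' => a.2 h'.symm
  | @cons a u b h q ih =>
    obtain ⟨p, hp⟩ := ih
    refine ⟨Walk.cons (show T.Adj a.1 u.1 from h) p, ?_⟩
    rw [Walk.support_cons]
    intro hmem
    rcases List.mem_cons.mp hmem with h' | h'
    · exact a.2 h'.symm
    · exact hp h'

lemma tree_no_cross {T : SimpleGraph β} (hT : T.IsAcyclic) {s t v : β}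
    (hst : T.Adj s t) (p : T.Walk v s) (hp : t ∉ p.support)
    (q : T.Walk v t) (hq : s ∉ q.support) : False := by
  classical
  have hp' : t ∉ p.bypass.support := fun h => hp (p.support_bypass_subset h)
  have hq' : s ∉ q.bypass.support := fun h => hq (q.support_bypass_subset h)
  have hr : (p.bypass.concat hst).IsPath := by
    rw [← Walk.isPath_reverse_iff, Walk.reverse_concat]
    refine (Walk.cons_isPath_iff _ _).mpr ⟨(Walk.isPath_reverse_iff _).mpr p.bypass_isPath, ?_⟩
    rw [Walk.support_reverse]
    exact fun h => hp' (List.mem_reverse.mp h)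
  have huniq := hT.path_unique ⟨p.bypass.concat hst, hr⟩ ⟨q.bypass, q.bypass_isPath⟩
  have hmem : s ∈ (p.bypass.concat hst).support := by
    rw [Walk.support_concat, List.mem_append]
    exact Or.inl p.bypass.end_mem_support
  rw [show (p.bypass.concat hst) = q.bypass from congrArg Subtype.val huniq] at hmem
  exact hq' hmem

lemma not_end_mem_takeUntil {T : SimpleGraph β} [DecidableEq β] {v t s : β} (P : T.Walk v t)
    (hP : P.IsPath) (h : s ∈ P.support) (hst : s ≠ t) : t ∉ (P.takeUntil s h).support := by
  intro ht
  have hspec := P.take_spec h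
  have hnd : P.support.Nodup := hP.support_nodup
  rw [← hspec, Walk.support_append, List.nodup_append] at hnd
  have ht2 : t ∈ (P.dropUntil s h).support.tail := by
    have htd : t ∈ (P.dropUntil s h).support := Walk.end_mem_support _
    rw [Walk.support_eq_cons] at htd
    rcases List.mem_cons.mp htd with h' | h'
    · exact absurd h'.symm hst
    · exact h'
  exact hnd.2.2 t ht t ht2 rfl

lemma exists_adj_reach {T : SimpleGraph β} (hT : T.Connected) (t : β) :
    ∀ {w : β} (_ : T.Walk w t) (hw : w ≠ t),
      ∃ (s : β) (hs : s ≠ t), T.Adj s t ∧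
        (T.induce {x : β | x ≠ t}).Reachable ⟨w, hw⟩ ⟨s, hs⟩ := by
  intro w p
  induction p with
  | nil => exact fun hw => absurd rfl hw
  | @cons a u b h q ih =>
    intro hw
    by_cases hu : u = b
    · subst hu
      exact ⟨a, hw, h, Reachable.refl _⟩
    · obtain ⟨s, hs, hadj, hre⟩ := ih hu
      have hadj2 : (T.induce {x : β | x ≠ b}).Adj ⟨a, hw⟩ ⟨u, hu⟩ := h
      exact ⟨s, hs, hadj, (hadj2.reachable).trans hre⟩

/-- In a finite tree equipped with a monotone "spanning" predicate on vertex sets such that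
for every vertex `t` and component `c` of `T - t` either the component or its complement
spans, there is a vertex all of whose component-complements span. -/
lemma exists_sink {β : Type*} [Finite β] {T : SimpleGraph β} (hT : T.IsTree)
    (Spans : Set β → Prop) (hmono : ∀ {W W' : Set β}, W ⊆ W' → Spans W → Spans W')
    (hdich : ∀ W : Set β, Spans W ∨ Spans Wᶜ) :
    ∃ t : β, ∀ c : (T.induce {s : β | s ≠ t}).ConnectedComponent,
      Spans {v : β | ∃ h : v ≠ t,
        (T.induce {s : β | s ≠ t}).connectedComponentMk ⟨v, h⟩ = c}ᶜ := by
  classical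
  by_contra hcon
  push_neg at hcon
  set VS : (t : β) → (T.induce {s : β | s ≠ t}).ConnectedComponent → Set β :=
    fun t c => {v : β | ∃ h : v ≠ t,
      (T.induce {s : β | s ≠ t}).connectedComponentMk ⟨v, h⟩ = c} with hVS
  set N : Set ℕ := {n : ℕ | ∃ t c, ¬ Spans (VS t c)ᶜ ∧ (VS t c).ncard = n} with hNdef
  have hNne : N.Nonempty := by
    obtain ⟨t0⟩ := hT.isConnected.nonempty
    obtain ⟨c0, hc0⟩ := hcon t0
    exact ⟨(VS t0 c0).ncard, t0, c0, hc0, rfl⟩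
  obtain ⟨t, c, hbad, hcard⟩ := Nat.sInf_mem hNne
  -- a representative of `c`
  obtain ⟨x, hx⟩ := c.exists_rep
  -- a neighbour `s` of `t` inside the component `c`
  obtain ⟨p⟩ := hT.isConnected.preconnected x.1 t
  obtain ⟨s, hs, hadj, hreach⟩ := exists_adj_reach hT.isConnected t p x.2
  have hsc : (T.induce {s : β | s ≠ t}).connectedComponentMk ⟨s, hs⟩ = c := by
    rw [← hx]
    exact (SimpleGraph.ConnectedComponent.eq).mpr hreach.symm
  have hts : t ≠ s := fun h => hs h.symm
  obtain ⟨c', hbad'⟩ := hcon s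
  have hSpans' : Spans (VS s c') := (hdich (VS s c')).resolve_right hbad'
  set ct : (T.induce {x : β | x ≠ s}).ConnectedComponent :=
    (T.induce {x : β | x ≠ s}).connectedComponentMk ⟨t, hts⟩ with hct
  by_cases hc : c' = ct
  · -- the bad component at `s` contains `t`; its vertex set avoids `VS t c`
    have claim : VS s c' ⊆ (VS t c)ᶜ := by
      rintro v ⟨hvs, hvc'⟩
      rintro ⟨hvt, hvc⟩
      have hre1 : (T.induce {x : β | x ≠ s}).Reachable ⟨v, hvs⟩ ⟨t, hts⟩ :=
        (SimpleGraph.ConnectedComponent.eq).mp (by rw [hvc', hc])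
      obtain ⟨p1, hp1⟩ := walk_of_reach T s hre1
      have hre2 : (T.induce {x : β | x ≠ t}).Reachable ⟨v, hvt⟩ ⟨s, hs⟩ :=
        (SimpleGraph.ConnectedComponent.eq).mp (by rw [hvc, hsc])
      obtain ⟨p2, hp2⟩ := walk_of_reach T t hre2
      exact tree_no_cross hT.IsAcyclic hadj p2 hp2 p1 hp1
    exact hbad (hmono claim hSpans')
  · -- the bad component at `s` avoids `t`; its vertex set is strictly inside `VS t c`
    have claim : VS s c' ⊆ VS t c := by
      rintro v ⟨hvs, hvc'⟩
      have hvt : v ≠ t := by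
        rintro rfl
        exact hc (hvc'.symm)
      have hnr : ¬ (T.induce {x : β | x ≠ s}).Reachable ⟨v, hvs⟩ ⟨t, hts⟩ := fun hr =>
        hc (hvc'.symm.trans ((SimpleGraph.ConnectedComponent.eq).mpr hr))
      obtain ⟨p0⟩ := hT.isConnected.preconnected v t
      have hsP : s ∈ p0.bypass.support := by
        by_contra hsP
        exact hnr (reach_of_walk T s p0.bypass hsP hvs hts)
      have hQ := not_end_mem_takeUntil p0.bypass p0.bypass_isPath hsP hs
      have hre := reach_of_walk T t (p0.bypass.takeUntil s hsP) hQ hvt hs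
      exact ⟨hvt, ((SimpleGraph.ConnectedComponent.eq).mpr hre).trans hsc⟩
    have hsmem : s ∈ VS t c := ⟨hs, hsc⟩
    have hsnot : s ∉ VS s c' := by rintro ⟨h, -⟩; exact h rfl
    have hss : VS s c' ⊂ VS t c := ⟨claim, fun hsub => hsnot (hsub hsmem)⟩
    have hlt : (VS s c').ncard < (VS t c).ncard := Set.ncard_lt_ncard hss (Set.toFinite _)
    have hle : sInf N ≤ (VS s c').ncard := Nat.sInf_le ⟨s, c', hbad', rfl⟩
    omega

end GraphAux

/-- If `R` is a round flat of a matroid `M`, then the tree-width of `M` is at least `r R`. -/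
theorem rank_round_flat_le_treeWidth {α : Type*} (M : Matroid α) [M.Finite] (R : Set α)
    (hflat : M.IsFlat R) (hround : M.RoundSet R) :
    M.mRank R ≤ M.treeWidth := by
  classical
  have hRE : R ⊆ M.E := hround.1
  -- the trivial tree-decomposition shows the defining set is nonempty
  have hmem : M.mRk ∈ {n : ℕ | ∃ (β : Type) (T : SimpleGraph β) (τ : β → Set α),
      Finite β ∧ M.IsTreeDecomp T τ ∧ ∀ t, M.nodeWidth T τ t ≤ (n : ℤ)} := by
    refine ⟨Unit, ⊥, fun _ => M.E, inferInstance, ⟨?_, fun x hx => ⟨(), hx⟩⟩, ?_⟩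
    · constructor
      · constructor
        intro u v
        cases u; cases v
        exact SimpleGraph.Reachable.refl _
      · intro v w hw
        cases w with
        | nil => exact SimpleGraph.Walk.IsCycle.not_of_nil hw
        | cons h q => exact h.elim
    · intro t
      haveI hEmpty : IsEmpty ↥{s : Unit | s ≠ t} := ⟨fun s => s.2 (Subsingleton.elim _ _)⟩
      haveI : IsEmpty ((⊥ : SimpleGraph Unit).induce {s : Unit | s ≠ t}).ConnectedComponent :=
        ⟨fun c => SimpleGraph.ConnectedComponent.ind (fun v => isEmptyElim v) c⟩
      rw [Matroid.nodeWidth, finsum_of_isEmpty, Nat.card_of_isEmpty]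
      push_cast
      linarith
  refine le_csInf ⟨M.mRk, hmem⟩ ?_
  rintro n ⟨β, T, τ, hfin, ⟨hTree, hcov⟩, hbound⟩
  haveI := hfin
  -- the spanning predicate on vertex sets
  set Spans : Set β → Prop := fun W => R ⊆ M.closure (⋃ v ∈ W, τ v) with hSpans
  have hmono : ∀ {W W' : Set β}, W ⊆ W' → Spans W → Spans W' := by
    intro W W' hWW h
    exact h.trans (M.closure_subset_closure
      (Set.biUnion_subset_biUnion_left hWW))
  have hdich : ∀ W : Set β, Spans W ∨ Spans Wᶜ := by
    intro W
    apply Matroid.round_cover hround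
    intro x hxR
    obtain ⟨v, hv⟩ := hcov x (hRE hxR)
    by_cases hvW : v ∈ W
    · exact Or.inl (Set.mem_biUnion hvW hv)
    · exact Or.inr (Set.mem_biUnion hvW hv)
  obtain ⟨t, hsink⟩ := exists_sink hTree Spans hmono hdich
  -- notation for the components of `T - t`
  set C := (T.induce {s : β | s ≠ t}).ConnectedComponent with hC
  haveI : Finite C := Quot.finite _
  haveI : Fintype C := Fintype.ofFinite C
  set A : C → Set α := fun c => τ t ∪ ⋃ (s : {s : β // s ≠ t})
    (_ : (T.induce {s : β | s ≠ t}).connectedComponentMk s ≠ c), τ s.1 with hA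
  -- the complement of a component's vertex set has `A c` as the union of its bags
  have hAeq : ∀ c : C, (⋃ v ∈ {v : β | ∃ h : v ≠ t,
      (T.induce {s : β | s ≠ t}).connectedComponentMk ⟨v, h⟩ = c}ᶜ, τ v) = A c := by
    intro c
    ext x
    simp only [Set.mem_iUnion, Set.mem_compl_iff, Set.mem_setOf_eq, hA, Set.mem_union,
      not_exists]
    constructor
    · rintro ⟨v, hv, hxv⟩
      by_cases hvt : v = t
      · exact Or.inl (hvt ▸ hxv)
      · exact Or.inr ⟨⟨v, hvt⟩, hv hvt, hxv⟩
    · rintro (hx | ⟨⟨v, hvt⟩, hvc, hxv⟩)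
      · exact ⟨t, fun h => absurd rfl h, hx⟩
      · exact ⟨v, fun h => fun hc => hvc hc, hxv⟩
  have hsink' : ∀ c : C, R ⊆ M.closure (A c) := by
    intro c
    have := hsink c
    rw [hSpans] at this
    rwa [hAeq c] at this
  -- pairwise unions of the `A c` cover the ground set
  have hsp : ∀ c ∈ (Finset.univ : Finset C), ∀ c' ∈ (Finset.univ : Finset C),
      c ≠ c' → M.E ⊆ A c ∪ A c' := by
    intro c _ c' _ hcc' x hx
    obtain ⟨v, hv⟩ := hcov x hx
    by_cases hvt : v = t
    · exact Or.inl (Or.inl (hvt ▸ hv))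
    · by_cases hvc : (T.induce {s : β | s ≠ t}).connectedComponentMk ⟨v, hvt⟩ = c
      · exact Or.inr (Or.inr (Set.mem_iUnion.mpr ⟨⟨v, hvt⟩,
          Set.mem_iUnion.mpr ⟨fun h => hcc' (hvc.symm.trans h), hv⟩⟩))
      · exact Or.inl (Or.inr (Set.mem_iUnion.mpr ⟨⟨v, hvt⟩, Set.mem_iUnion.mpr ⟨hvc, hv⟩⟩))
  have hkey := M.aux_sum A Finset.univ hsp
  have hR2 : M.mRank R ≤ M.mRank (⋂ c ∈ (Finset.univ : Finset C), M.closure (A c)) :=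
    M.mRank_mono (Set.subset_iInter₂ fun c _ => hsink' c)
  -- translate to `nodeWidth`
  have hwidth : M.nodeWidth T τ t
      = ((∑ c : C, M.mRank (A c) : ℕ) : ℤ) - ((Nat.card C : ℤ) - 1) * (M.mRk : ℤ) := by
    rw [Matroid.nodeWidth]
    rw [finsum_eq_sum_of_fintype]
    push_cast
    rfl
  have hcardC : (Nat.card C) = (Finset.univ : Finset C).card := by
    rw [Nat.card_eq_fintype_card]
    rfl
  have hfinal : (M.mRank R : ℤ) ≤ M.nodeWidth T τ t := by
    rw [hwidth]
    have h1 : (Finset.univ : Finset C).card * M.mRk + M.mRank R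
        ≤ (∑ c : C, M.mRank (A c)) + M.mRk := le_trans (by linarith [hR2]) hkey
    rw [hcardC]
    push_cast
    push_cast at h1
    linarith
  have := hfinal.trans (hbound t)
  exact_mod_cast this
end

section
/- Let H be a modular hyperplane of a matroid M and let X be a subset of the cocircuit E(M)−H. Then the set {P_H(x,y) : x, y ∈ X, r({x,y}) = 2} (i.e., the union of all projections onto H of pairs of distinct non-parallel elements of X) is a round subset of M. -/
open Set

open Matroid

namespace Matroid

variable {γ : Type*} {M : Matroid γ} {I J X Y F H P : Set γ} {a b c e z w : γ}

/-! ### Auxiliary flat lemmas -/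

lemma flat_of_closure_subset' (hFE : F ⊆ M.E) (h : M.closure F ⊆ F) : M.IsFlat F :=
  ⟨fun I Y hI hIY => (hIY.subset_closure.trans (by rw [hI.closure_eq_closure]; exact h)),
    hFE⟩

lemma flat_closure' (M : Matroid γ) (X : Set γ) : M.IsFlat (M.closure X) :=
  flat_of_closure_subset' (M.closure_subset_ground X) (by rw [closure_closure])

lemma IsFlat.inter' (h₁ : M.IsFlat F) (h₂ : M.IsFlat Y) : M.IsFlat (F ∩ Y) := by
  refine flat_of_closure_subset' (inter_subset_left.trans h₁.subset_ground) ?_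
  refine subset_inter ?_ ?_
  · exact (M.closure_subset_closure inter_subset_left).trans h₁.closure.subset
  · exact (M.closure_subset_closure inter_subset_right).trans h₂.closure.subset

/-! ### Rank lemmas for `mRank` -/

lemma bddAbove_mRankSet (M : Matroid γ) [M.Finite] (X : Set γ) :
    BddAbove {n : ℕ | ∃ I, M.Indep I ∧ I ⊆ X ∧ I.ncard = n} := by
  refine ⟨M.E.ncard, ?_⟩
  rintro n ⟨I, hI, -, rfl⟩
  exact Set.ncard_le_ncard hI.subset_ground M.ground_finite

lemma ncard_le_mRank_s11 [M.Finite] (hJ : M.Indep J) (hJX : J ⊆ X) : J.ncard ≤ M.mRank X :=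
  le_csSup (M.bddAbove_mRankSet X) ⟨J, hJ, hJX, rfl⟩

lemma mRank_eq_of_basis [M.Finite] (hI : M.IsBasis I X) : M.mRank X = I.ncard := by
  refine le_antisymm (csSup_le ⟨0, ∅, M.empty_indep, Set.empty_subset _, by simp⟩ ?_)
    (ncard_le_mRank_s11 hI.indep hI.subset)
  rintro n ⟨J, hJ, hJX, rfl⟩
  obtain ⟨J', hJ', hsub⟩ := hJ.subset_isBasis_of_subset hJX hI.subset_ground
  have h1 : J.ncard ≤ J'.ncard :=
    Set.ncard_le_ncard hsub (M.set_finite J' hJ'.indep.subset_ground)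
  have h2 : J'.encard = I.encard := hJ'.encard_eq_encard hI
  rw [Set.ncard_def J, Set.ncard_def J', h2] at h1
  rwa [Set.ncard_def J, Set.ncard_def I]

lemma mRank_mono' [M.Finite] (hXY : X ⊆ Y) (hY : Y ⊆ M.E) : M.mRank X ≤ M.mRank Y := by
  obtain ⟨I, hI⟩ := M.exists_isBasis X (hXY.trans hY)
  rw [mRank_eq_of_basis hI]
  exact ncard_le_mRank_s11 hI.indep (hI.subset.trans hXY)

lemma mRank_closure_eq' [M.Finite] (hX : X ⊆ M.E) :
    M.mRank (M.closure X) = M.mRank X := by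
  obtain ⟨I, hI⟩ := M.exists_isBasis X hX
  rw [mRank_eq_of_basis hI.isBasis_closure_right, mRank_eq_of_basis hI]

lemma mRank_le_mRk' [M.Finite] (hX : X ⊆ M.E) : M.mRank X ≤ M.mRk :=
  mRank_mono' hX Subset.rfl

lemma mRank_insert_le' [M.Finite] (hX : X ⊆ M.E) (he : e ∈ M.E) :
    M.mRank (insert e X) ≤ M.mRank X + 1 := by
  obtain ⟨J, hJ⟩ := M.exists_isBasis (insert e X) (insert_subset he hX)
  rw [mRank_eq_of_basis hJ]
  have hJfin : J.Finite := M.set_finite J hJ.indep.subset_ground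
  have hsub : J \ {e} ⊆ X := fun x hx =>
    ((hJ.subset hx.1).resolve_left (by simpa using hx.2))
  have h1 : (J \ {e}).ncard ≤ M.mRank X :=
    ncard_le_mRank_s11 (hJ.indep.subset Set.diff_subset) hsub
  by_cases heJ : e ∈ J
  · have := Set.ncard_diff_singleton_add_one heJ hJfin
    omega
  · rw [Set.diff_singleton_eq_self heJ] at h1; omega

lemma mem_closure_iff_mRank' [M.Finite] (hX : X ⊆ M.E) (he : e ∈ M.E) :
    e ∈ M.closure X ↔ M.mRank (insert e X) = M.mRank X := by
  constructor
  · intro h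
    refine le_antisymm ?_ (mRank_mono' (Set.subset_insert _ _) (insert_subset he hX))
    have h1 : insert e X ⊆ M.closure X := insert_subset h (M.subset_closure X hX)
    have := mRank_mono' h1 (M.closure_subset_ground X)
    rwa [mRank_closure_eq' hX] at this
  · intro h
    by_contra hecl
    obtain ⟨I, hI⟩ := M.exists_isBasis X hX
    have heI : e ∉ I := fun heI => hecl (M.subset_closure X hX (hI.subset heI))
    have hind : M.Indep (insert e I) := by
      rw [hI.indep.insert_indep_iff]
      exact Or.inl ⟨he, by rwa [hI.closure_eq_closure]⟩
    have h2 : (insert e I).ncard ≤ M.mRank (insert e X) :=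
      ncard_le_mRank_s11 hind (insert_subset_insert hI.subset)
    rw [Set.ncard_insert_of_notMem heI (M.set_finite I hI.indep.subset_ground)] at h2
    rw [mRank_eq_of_basis hI] at h
    omega

lemma flat_eq_of_le_mRank' [M.Finite] {L : Set γ} (hF : M.IsFlat F) (hL : M.IsFlat L)
    (hFL : F ⊆ L) (hr : M.mRank L ≤ M.mRank F) : F = L := by
  refine hFL.antisymm fun x hx => ?_
  have hxE := hL.subset_ground hx
  have h1 : M.mRank (insert x F) ≤ M.mRank F :=
    (mRank_mono' (insert_subset hx hFL) hL.subset_ground).trans hr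
  have h2 : M.mRank F ≤ M.mRank (insert x F) :=
    mRank_mono' (Set.subset_insert _ _) (insert_subset hxE hF.subset_ground)
  have := (mem_closure_iff_mRank' hF.subset_ground hxE).2 (le_antisymm h1 h2)
  rwa [hF.closure] at this

lemma mRank_insert_of_not_mem_flat' [M.Finite] (hF : M.IsFlat F) (he : e ∈ M.E)
    (heF : e ∉ F) : M.mRank (insert e F) = M.mRank F + 1 := by
  have h1 := mRank_insert_le' hF.subset_ground he
  have h2 : M.mRank F ≤ M.mRank (insert e F) :=
    mRank_mono' (Set.subset_insert _ _) (insert_subset he hF.subset_ground)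
  have h3 : M.mRank (insert e F) ≠ M.mRank F := fun h => by
    have := (mem_closure_iff_mRank' hF.subset_ground he).2 h
    rw [hF.closure] at this
    exact heF this
  omega

lemma mRank_singleton_of_indep' [M.Finite] (h : M.Indep {z}) : M.mRank {z} = 1 := by
  rw [mRank_eq_of_basis h.isBasis_self, Set.ncard_singleton]

lemma exists_nonloop_of_mRank_one' [M.Finite] (hX : X ⊆ M.E) (h : M.mRank X = 1) :
    ∃ z ∈ X, M.Indep {z} := by
  obtain ⟨I, hI⟩ := M.exists_isBasis X hX
  rw [mRank_eq_of_basis hI] at h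
  obtain ⟨z, rfl⟩ := Set.ncard_eq_one.1 h
  exact ⟨z, hI.subset rfl, hI.indep⟩

lemma point_eq_closure' [M.Finite] (hF : M.IsFlat F) (h1 : M.mRank F = 1)
    (hz : z ∈ F) (hnl : M.Indep {z}) : F = M.closure {z} := by
  have hzE : z ∈ M.E := hF.subset_ground hz
  have hcl : M.closure {z} ⊆ F := by
    rw [← hF.closure]
    exact M.closure_subset_closure (Set.singleton_subset_iff.2 hz)
  refine (flat_eq_of_le_mRank' (M.flat_closure' {z}) hF hcl ?_).symm
  rw [h1, mRank_closure_eq' (Set.singleton_subset_iff.2 hzE), mRank_singleton_of_indep' hnl]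

lemma not_mem_closure_empty_of_indep' (h : M.Indep {e}) : e ∉ M.closure ∅ := by
  intro hecl
  have := M.empty_indep.insert_indep_iff (e := e)
  rw [insert_empty_eq] at this
  rcases this.1 h with h' | h'
  · exact h'.2 hecl
  · exact h'

lemma closure_ne_helper' [M.Finite] (ha : M.Indep {a}) (hb : M.Indep {b})
    (hab : a ∈ M.closure {b}) : M.closure {a} = M.closure {b} := by
  have h1 : a ∈ M.closure (insert b ∅) \ M.closure ∅ := by
    rw [insert_empty_eq]
    exact ⟨hab, not_mem_closure_empty_of_indep' ha⟩
  have h2 := Matroid.closure_exchange h1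
  rw [insert_empty_eq] at h2
  refine le_antisymm ?_ ?_
  · exact M.closure_subset_closure_of_subset_closure (Set.singleton_subset_iff.2 hab)
  · exact M.closure_subset_closure_of_subset_closure (Set.singleton_subset_iff.2 h2.1)

lemma pair_facts' [M.Finite] (ha : M.Indep {a}) (hb : M.Indep {b})
    (hne : M.closure {a} ≠ M.closure {b}) :
    M.Indep {a, b} ∧ M.mRank {a, b} = 2 ∧ b ∉ M.closure {a} := by
  have haE : a ∈ M.E := ha.subset_ground rfl
  have hbE : b ∈ M.E := hb.subset_ground rfl
  have hanb : a ∉ M.closure {b} := fun h => hne (closure_ne_helper' ha hb h)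
  have hbna : b ∉ M.closure {a} := fun h => hne (closure_ne_helper' hb ha h).symm
  have hne' : a ≠ b := fun h => hne (by rw [h])
  have hind : M.Indep {a, b} := by
    have := hb.insert_indep_iff (e := a)
    rw [show (insert a {b} : Set γ) = {a, b} by rfl] at this
    exact this.2 (Or.inl ⟨haE, hanb⟩)
  exact ⟨hind, by rw [mRank_eq_of_basis hind.isBasis_self, Set.ncard_pair hne'], hbna⟩

/-- Key modularity computation: if `H` is a modular hyperplane and `Y ⊆ M.E` contains
an element outside `H`, then `r H + r Y = r M + r (H ∩ cl Y)`. -/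
lemma modular_proj_rank' [M.Finite] (hH : M.IsHyperplane H) (hmod : M.IsModularFlat H)
    (hY : Y ⊆ M.E) (haY : a ∈ Y) (haH : a ∉ H) :
    M.mRank H + M.mRank Y = M.mRk + M.mRank (H ∩ M.closure Y) := by
  have hHE : H ⊆ M.E := hH.1.subset_ground
  have haE : a ∈ M.E := hY haY
  have hflat : M.IsFlat (M.closure Y) := M.flat_closure' Y
  have hmeq := hmod.2 _ hflat
  have hclr : M.mRank (M.closure Y) = M.mRank Y := mRank_closure_eq' hY
  have hins : M.mRank (insert a H) = M.mRank H + 1 :=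
    mRank_insert_of_not_mem_flat' hH.1 haE haH
  have hsub1 : insert a H ⊆ H ∪ M.closure Y :=
    insert_subset (Or.inr (M.subset_closure Y hY haY)) Set.subset_union_left
  have hsub2 : H ∪ M.closure Y ⊆ M.E :=
    Set.union_subset hHE (M.closure_subset_ground Y)
  have h1 : M.mRank (insert a H) ≤ M.mRank (H ∪ M.closure Y) := mRank_mono' hsub1 hsub2
  have h2 : M.mRank (H ∪ M.closure Y) ≤ M.mRk := mRank_le_mRk' hsub2
  have hHr := hH.2
  have hunion : M.mRank (H ∪ M.closure Y) = M.mRk := by omega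
  rw [hclr, hunion] at hmeq
  omega

/-- Flats of a restriction absorb the `M`-closure intersected with the base set. -/
lemma restrict_flat_closure_inter_subset' [M.Finite] (hP : P ⊆ M.E)
    (hF : (M ↾ P).IsFlat F) : M.closure F ∩ P ⊆ F := by
  have hFP : F ⊆ P := hF.subset_ground
  have hFE : F ⊆ M.E := hFP.trans hP
  obtain ⟨I, hI⟩ := M.exists_isBasis F hFE
  have hIN : (M ↾ P).IsBasis I F := (isBasis_restrict_iff hP).2 ⟨hI, hFP⟩
  rintro z ⟨hzcl, hzP⟩
  have hIN' : (M ↾ P).IsBasis I (insert z F) := by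
    refine (isBasis_restrict_iff hP).2 ⟨?_, insert_subset hzP hFP⟩
    rw [isBasis_iff_indep_closure]
    refine ⟨hI.indep, ?_, hI.subset.trans (Set.subset_insert _ _)⟩
    rw [hI.closure_eq_closure]
    exact insert_subset hzcl (M.subset_closure F hFE)
  exact hF.subset_of_isBasis_of_isBasis hIN hIN' (Set.mem_insert _ _)

/-- Two equivalence-like relations covering all pairs: one of them is total. -/
lemma two_equiv_total' {X : Set γ} {r1 r2 : γ → γ → Prop}
    (s1 : ∀ a ∈ X, ∀ b ∈ X, r1 a b → r1 b a)
    (t1 : ∀ a ∈ X, ∀ b ∈ X, ∀ c ∈ X, r1 a b → r1 b c → r1 a c)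
    (s2 : ∀ a ∈ X, ∀ b ∈ X, r2 a b → r2 b a)
    (t2 : ∀ a ∈ X, ∀ b ∈ X, ∀ c ∈ X, r2 a b → r2 b c → r2 a c)
    (tot : ∀ a ∈ X, ∀ b ∈ X, r1 a b ∨ r2 a b) :
    (∀ a ∈ X, ∀ b ∈ X, r1 a b) ∨ (∀ a ∈ X, ∀ b ∈ X, r2 a b) := by
  by_contra hcon
  push_neg at hcon
  obtain ⟨⟨a, ha, b, hb, hab⟩, c, hc, d, hd, hcd⟩ := hcon
  have hab2 : r2 a b := (tot a ha b hb).resolve_left hab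
  have hcd1 : r1 c d := (tot c hc d hd).resolve_right hcd
  rcases tot c hc a ha with hca1 | hca2
  · rcases tot c hc b hb with hcb1 | hcb2
    · exact hab (t1 a ha c hc b hb (s1 c hc a ha hca1) hcb1)
    · rcases tot d hd b hb with hdb1 | hdb2
      · exact hab (t1 a ha d hd b hb
          (t1 a ha c hc d hd (s1 c hc a ha hca1) hcd1) hdb1)
      · exact hcd (t2 c hc b hb d hd hcb2 (s2 d hd b hb hdb2))
  · rcases tot d hd a ha with hda1 | hda2
    · rcases tot d hd b hb with hdb1 | hdb2
      · exact hab (t1 a ha d hd b hb (s1 d hd a ha hda1) hdb1)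
      · have hda2 : r2 d a := t2 d hd b hb a ha hdb2 (s2 a ha b hb hab2)
        exact hcd (t2 c hc a ha d hd hca2 (s2 d hd a ha hda2))
    · exact hcd (t2 c hc a ha d hd hca2 (s2 d hd a ha hda2))

end Matroid


namespace Matroid

variable {γ : Type*} {M : Matroid γ} {X F H : Set γ} {a b c z w : γ}

lemma subset_projUnion' (ha : a ∈ X) (hb : b ∈ X)
    (hne : M.closure {a} ≠ M.closure {b}) :
    H ∩ M.closure {a, b} ⊆ M.projUnion H X := fun x hx => by
  simp only [projUnion, Set.mem_iUnion]
  exact ⟨a, ha, b, hb, hne, hx⟩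

lemma projUnion_subset' : M.projUnion H X ⊆ H := by
  simp only [projUnion, Set.iUnion_subset_iff]
  exact fun a _ b _ _ => Set.inter_subset_left

lemma indep_singleton_of_mem' (hH : M.IsFlat H) (hX : X ⊆ M.E \ H) (ha : a ∈ X) :
    M.Indep {a} := by
  have hcl : M.closure ∅ ⊆ H := by
    have := M.closure_subset_closure (Set.empty_subset H)
    rwa [hH.closure] at this
  have hne : a ∉ M.closure ∅ := fun h => (hX ha).2 (hcl h)
  rw [show ({a} : Set γ) = insert a ∅ from (insert_empty_eq a).symm]
  exact (M.empty_indep.insert_indep_iff).2 (Or.inl ⟨(hX ha).1, hne⟩)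

lemma pair_subset_ground' (hX : X ⊆ M.E \ H) (ha : a ∈ X) (hb : b ∈ X) :
    ({a, b} : Set γ) ⊆ M.E := by
  rintro x (rfl | rfl)
  exacts [(hX ha).1, (hX hb).1]

lemma proj_point_rank' [M.Finite] (hH : M.IsHyperplane H) (hmod : M.IsModularFlat H)
    (hX : X ⊆ M.E \ H) (ha : a ∈ X) (hb : b ∈ X)
    (hne : M.closure {a} ≠ M.closure {b}) :
    M.mRank (H ∩ M.closure {a, b}) = 1 := by
  have hanl := indep_singleton_of_mem' hH.1 hX ha
  have hbnl := indep_singleton_of_mem' hH.1 hX hb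
  have hpair := (pair_facts' hanl hbnl hne).2.1
  have heq := modular_proj_rank' hH hmod (pair_subset_ground' hX ha hb)
    (Set.mem_insert a {b}) (hX ha).2
  have hHr := hH.2
  omega

lemma point_subset_flat' [M.Finite] (hH : M.IsHyperplane H) (hmod : M.IsModularFlat H)
    (hX : X ⊆ M.E \ H) (hF : (M ↾ M.projUnion H X).IsFlat F)
    (ha : a ∈ X) (hb : b ∈ X) (hne : M.closure {a} ≠ M.closure {b})
    (hz : z ∈ H ∩ M.closure {a, b}) (hznl : M.Indep {z}) (hzF : z ∈ F) :
    H ∩ M.closure {a, b} ⊆ F := by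
  have hPE : M.projUnion H X ⊆ M.E := projUnion_subset'.trans hH.1.subset_ground
  have hpflat : M.IsFlat (H ∩ M.closure {a, b}) := hH.1.inter' (M.flat_closure' _)
  have hp1 := proj_point_rank' hH hmod hX ha hb hne
  have hpeq : H ∩ M.closure {a, b} = M.closure {z} :=
    point_eq_closure' hpflat hp1 hz hznl
  intro x hx
  have hxP : x ∈ M.projUnion H X := subset_projUnion' ha hb hne hx
  have hxcl : x ∈ M.closure F :=
    (M.closure_subset_closure (Set.singleton_subset_iff.2 hzF)) (hpeq ▸ hx)
  exact restrict_flat_closure_inter_subset' hPE hF ⟨hxcl, hxP⟩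

lemma closure_singleton_subset_hyp' (hH : M.IsFlat H) (hzH : z ∈ H) :
    M.closure {z} ⊆ H := by
  rw [← hH.closure]
  exact M.closure_subset_closure (Set.singleton_subset_iff.2 hzH)

lemma rel_trans' [M.Finite] (hH : M.IsHyperplane H) (hmod : M.IsModularFlat H)
    (hX : X ⊆ M.E \ H) (hF : (M ↾ M.projUnion H X).IsFlat F)
    (ha : a ∈ X) (hb : b ∈ X) (hc : c ∈ X)
    (hab : M.closure {a} = M.closure {b} ∨ H ∩ M.closure {a, b} ⊆ F)
    (hbc : M.closure {b} = M.closure {c} ∨ H ∩ M.closure {b, c} ⊆ F) :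
    M.closure {a} = M.closure {c} ∨ H ∩ M.closure {a, c} ⊆ F := by
  by_cases hac : M.closure {a} = M.closure {c}
  · exact Or.inl hac
  right
  have hanl := indep_singleton_of_mem' hH.1 hX ha
  have hbnl := indep_singleton_of_mem' hH.1 hX hb
  have hcnl := indep_singleton_of_mem' hH.1 hX hc
  have haE := (hX ha).1
  have hbE := (hX hb).1
  have hcE := (hX hc).1
  have hEab := pair_subset_ground' (M := M) hX ha hb
  have hEac := pair_subset_ground' (M := M) hX ha hc
  have hEbc := pair_subset_ground' (M := M) hX hb hc
  by_cases habeq : M.closure {a} = M.closure {b}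
  · have hbcne : M.closure {b} ≠ M.closure {c} := fun h => hac (habeq.trans h)
    have hbc2 : H ∩ M.closure {b, c} ⊆ F := hbc.resolve_left hbcne
    have hcl : M.closure {a, c} = M.closure {b, c} := by
      have hamem : a ∈ M.closure {b, c} := by
        have h0 : a ∈ M.closure {a} := M.subset_closure {a}
          (Set.singleton_subset_iff.2 haE) rfl
        rw [habeq] at h0
        exact M.closure_subset_closure
          (Set.singleton_subset_iff.2 (Set.mem_insert b {c})) h0
      have hbmem : b ∈ M.closure {a, c} := by
        have h0 : b ∈ M.closure {b} := M.subset_closure {b}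
          (Set.singleton_subset_iff.2 hbE) rfl
        rw [← habeq] at h0
        exact M.closure_subset_closure
          (Set.singleton_subset_iff.2 (Set.mem_insert a {c})) h0
      have hcac : c ∈ M.closure {a, c} := M.subset_closure {a, c} hEac
        (Set.mem_insert_of_mem a rfl)
      have hcbc : c ∈ M.closure {b, c} := M.subset_closure {b, c} hEbc
        (Set.mem_insert_of_mem b rfl)
      exact (M.closure_subset_closure_of_subset_closure
          (Set.insert_subset hamem (Set.singleton_subset_iff.2 hcbc))).antisymm
        (M.closure_subset_closure_of_subset_closure
          (Set.insert_subset hbmem (Set.singleton_subset_iff.2 hcac)))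
    rw [hcl]
    exact hbc2
  have hab2 : H ∩ M.closure {a, b} ⊆ F := hab.resolve_left habeq
  by_cases hbceq : M.closure {b} = M.closure {c}
  · have hcl : M.closure {a, c} = M.closure {a, b} := by
      have hcmem : c ∈ M.closure {a, b} := by
        have h0 : c ∈ M.closure {c} := M.subset_closure {c}
          (Set.singleton_subset_iff.2 hcE) rfl
        rw [← hbceq] at h0
        exact M.closure_subset_closure
          (show ({b} : Set γ) ⊆ {a, b} from
            Set.singleton_subset_iff.2 (Set.mem_insert_of_mem a rfl)) h0
      have hbmem : b ∈ M.closure {a, c} := by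
        have h0 : b ∈ M.closure {b} := M.subset_closure {b}
          (Set.singleton_subset_iff.2 hbE) rfl
        rw [hbceq] at h0
        exact M.closure_subset_closure
          (show ({c} : Set γ) ⊆ {a, c} from
            Set.singleton_subset_iff.2 (Set.mem_insert_of_mem a rfl)) h0
      have haab : a ∈ M.closure {a, b} := M.subset_closure {a, b} hEab
        (Set.mem_insert a {b})
      have haac : a ∈ M.closure {a, c} := M.subset_closure {a, c} hEac
        (Set.mem_insert a {c})
      exact (M.closure_subset_closure_of_subset_closure
          (Set.insert_subset haab (Set.singleton_subset_iff.2 hcmem))).antisymm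
        (M.closure_subset_closure_of_subset_closure
          (Set.insert_subset haac (Set.singleton_subset_iff.2 hbmem)))
    rw [hcl]
    exact hab2
  have hbc2 : H ∩ M.closure {b, c} ⊆ F := hbc.resolve_left hbceq
  have hr2ab : M.mRank {a, b} = 2 := (pair_facts' hanl hbnl habeq).2.1
  have hr2ac : M.mRank {a, c} = 2 := (pair_facts' hanl hcnl hac).2.1
  by_cases hcab : c ∈ M.closure {a, b}
  · -- rank-two case : the lines coincide
    have hsub : M.closure {a, c} ⊆ M.closure {a, b} :=
      M.closure_subset_closure_of_subset_closure (Set.insert_subset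
        (M.subset_closure {a, b} hEab (Set.mem_insert a {b}))
        (Set.singleton_subset_iff.2 hcab))
    have hcl : M.closure {a, c} = M.closure {a, b} :=
      flat_eq_of_le_mRank' (M.flat_closure' _) (M.flat_closure' _) hsub
        (by rw [mRank_closure_eq' hEab, mRank_closure_eq' hEac, hr2ab, hr2ac])
    rw [hcl]
    exact hab2
  · -- rank-three case
    set T : Set γ := insert c {a, b} with hT
    have hTE : T ⊆ M.E := Set.insert_subset hcE hEab
    have haT : a ∈ T := Set.mem_insert_of_mem c (Set.mem_insert a {b})
    have hr3 : M.mRank T = 3 := by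
      have hne3 : M.mRank T ≠ M.mRank {a, b} :=
        fun h => hcab ((mem_closure_iff_mRank' hEab hcE).2 h)
      have hle : M.mRank T ≤ M.mRank {a, b} + 1 := mRank_insert_le' hEab hcE
      have hge : M.mRank {a, b} ≤ M.mRank T := mRank_mono' (Set.subset_insert c {a, b}) hTE
      omega
    have hLr : M.mRank (H ∩ M.closure T) = 2 := by
      have heq := modular_proj_rank' hH hmod hTE haT (hX ha).2
      have hHr := hH.2
      omega
    have hp1ab := proj_point_rank' hH hmod hX ha hb habeq
    have hp1bc := proj_point_rank' hH hmod hX hb hc hbceq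
    have hpabE : H ∩ M.closure {a, b} ⊆ M.E :=
      Set.inter_subset_left.trans hH.1.subset_ground
    have hpbcE : H ∩ M.closure {b, c} ⊆ M.E :=
      Set.inter_subset_left.trans hH.1.subset_ground
    obtain ⟨z, hzp, hznl⟩ := exists_nonloop_of_mRank_one' hpabE hp1ab
    obtain ⟨w, hwp, hwnl⟩ := exists_nonloop_of_mRank_one' hpbcE hp1bc
    have hzF : z ∈ F := hab2 hzp
    have hwF : w ∈ F := hbc2 hwp
    have hzwne : M.closure {z} ≠ M.closure {w} := by
      intro heq
      have hwpt : H ∩ M.closure {b, c} = M.closure {w} :=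
        point_eq_closure' (hH.1.inter' (M.flat_closure' _)) hp1bc hwp hwnl
      have hzbc : z ∈ M.closure {b, c} := by
        have hz0 : z ∈ M.closure {z} := M.subset_closure {z}
          (Set.singleton_subset_iff.2 (hpabE hzp)) rfl
        rw [heq, ← hwpt] at hz0
        exact hz0.2
      have hzb : z ∉ M.closure {b} := by
        intro h0
        have hclzb := closure_ne_helper' hznl hbnl h0
        have hbH : b ∈ H := closure_singleton_subset_hyp' hH.1 hzp.1
          (hclzb ▸ (M.subset_closure {b} (Set.singleton_subset_iff.2 hbE) rfl))
        exact (hX hb).2 hbH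
      rw [Set.pair_comm b c] at hzbc
      have hex := Matroid.closure_exchange ⟨hzbc, hzb⟩
      have hsub : M.closure (insert z {b}) ⊆ M.closure {a, b} :=
        M.closure_subset_closure_of_subset_closure (Set.insert_subset hzp.2
          (Set.singleton_subset_iff.2
            (M.subset_closure {a, b} hEab (Set.mem_insert_of_mem a rfl))))
      exact hcab (hsub hex.1)
    have hzwr : M.mRank {z, w} = 2 := (pair_facts' hznl hwnl hzwne).2.1
    have hEzw : ({z, w} : Set γ) ⊆ M.E := by
      rintro x (rfl | rfl)
      exacts [hpabE hzp, hpbcE hwp]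
    have hLflat : M.IsFlat (H ∩ M.closure T) := hH.1.inter' (M.flat_closure' T)
    have hzL : z ∈ H ∩ M.closure T :=
      ⟨hzp.1, M.closure_subset_closure (Set.subset_insert c {a, b}) hzp.2⟩
    have hwL : w ∈ H ∩ M.closure T := by
      refine ⟨hwp.1, M.closure_subset_closure ?_ hwp.2⟩
      refine Set.insert_subset (Set.mem_insert_of_mem c (Set.mem_insert_of_mem a rfl)) ?_
      exact Set.singleton_subset_iff.2 (Set.mem_insert c {a, b})
    have hzwsub : M.closure {z, w} ⊆ H ∩ M.closure T := by
      rw [← hLflat.closure]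
      exact M.closure_subset_closure
        (Set.insert_subset hzL (Set.singleton_subset_iff.2 hwL))
    have hzwL : M.closure {z, w} = H ∩ M.closure T :=
      flat_eq_of_le_mRank' (M.flat_closure' _) hLflat hzwsub
        (by rw [hLr, mRank_closure_eq' hEzw, hzwr])
    have hpac : H ∩ M.closure {a, c} ⊆ H ∩ M.closure T := by
      refine Set.inter_subset_inter Set.Subset.rfl (M.closure_subset_closure ?_)
      refine Set.insert_subset haT ?_
      exact Set.singleton_subset_iff.2 (Set.mem_insert c {a, b})
    intro x hx
    have hxL : x ∈ M.closure {z, w} := by rw [hzwL]; exact hpac hx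
    have hxF : x ∈ M.closure F :=
      (M.closure_subset_closure (Set.insert_subset hzF
        (Set.singleton_subset_iff.2 hwF))) hxL
    have hxP : x ∈ M.projUnion H X := subset_projUnion' ha hc hac hx
    exact restrict_flat_closure_inter_subset'
      (projUnion_subset'.trans hH.1.subset_ground) hF ⟨hxF, hxP⟩

end Matroid


/-- Let `H` be a modular hyperplane and `X` a subset of the cocircuit `E(M) − H`. Then the
union of the projections onto `H` of pairs of distinct non-parallel elements of `X` is a
round subset of `M`. -/
theorem projUnion_round {α : Type*} (M : Matroid α) [M.Finite]
    (H X : Set α) (hH : M.IsHyperplane H) (hmod : M.IsModularFlat H)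
    (hX : X ⊆ M.E \ H) :
    M.RoundSet (M.projUnion H X) := by
  have hPH : M.projUnion H X ⊆ H := Matroid.projUnion_subset'
  have hPE : M.projUnion H X ⊆ M.E := hPH.trans hH.1.subset_ground
  refine ⟨hPE, ?_⟩
  rintro F₁ F₂ ⟨⟨hf1, hne1⟩, ⟨hf2, hne2⟩, huni⟩
  have huni' : F₁ ∪ F₂ = M.projUnion H X := huni
  have hsym : ∀ (F : Set α), ∀ a ∈ X, ∀ b ∈ X,
      (M.closure {a} = M.closure {b} ∨ H ∩ M.closure {a, b} ⊆ F) →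
      (M.closure {b} = M.closure {a} ∨ H ∩ M.closure {b, a} ⊆ F) := by
    rintro F a _ b _ (h | h)
    · exact Or.inl h.symm
    · rw [Set.pair_comm]; exact Or.inr h
  have htot : ∀ a ∈ X, ∀ b ∈ X,
      (M.closure {a} = M.closure {b} ∨ H ∩ M.closure {a, b} ⊆ F₁) ∨
      (M.closure {a} = M.closure {b} ∨ H ∩ M.closure {a, b} ⊆ F₂) := by
    intro a ha b hb
    by_cases hab : M.closure {a} = M.closure {b}
    · exact Or.inl (Or.inl hab)
    have hp1 := Matroid.proj_point_rank' hH hmod hX ha hb hab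
    obtain ⟨z, hz, hznl⟩ := Matroid.exists_nonloop_of_mRank_one'
      (Set.inter_subset_left.trans hH.1.subset_ground) hp1
    have hzP : z ∈ M.projUnion H X := Matroid.subset_projUnion' ha hb hab hz
    rw [← huni'] at hzP
    rcases hzP with hz1 | hz2
    · exact Or.inl (Or.inr
        (Matroid.point_subset_flat' hH hmod hX hf1 ha hb hab hz hznl hz1))
    · exact Or.inr (Or.inr
        (Matroid.point_subset_flat' hH hmod hX hf2 ha hb hab hz hznl hz2))
  have hkey := Matroid.two_equiv_total'
    (r1 := fun a b => M.closure {a} = M.closure {b} ∨ H ∩ M.closure {a, b} ⊆ F₁)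
    (r2 := fun a b => M.closure {a} = M.closure {b} ∨ H ∩ M.closure {a, b} ⊆ F₂)
    (fun a ha b hb h => hsym F₁ a ha b hb h)
    (fun a ha b hb c hc h1 h2 => Matroid.rel_trans' hH hmod hX hf1 ha hb hc h1 h2)
    (fun a ha b hb h => hsym F₂ a ha b hb h)
    (fun a ha b hb c hc h1 h2 => Matroid.rel_trans' hH hmod hX hf2 ha hb hc h1 h2)
    htot
  have hfin : ∀ (F : Set α), (M ↾ M.projUnion H X).IsFlat F →
      (∀ a ∈ X, ∀ b ∈ X,
        M.closure {a} = M.closure {b} ∨ H ∩ M.closure {a, b} ⊆ F) →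
      F = (M ↾ M.projUnion H X).E := by
    intro F hf hall
    refine subset_antisymm hf.subset_ground ?_
    intro x hx
    rw [Matroid.restrict_ground_eq] at hx
    simp only [Matroid.projUnion, Set.mem_iUnion] at hx
    obtain ⟨a, ha, b, hb, hne, hxm⟩ := hx
    exact ((hall a ha b hb).resolve_left hne) hxm
  rcases hkey with h | h
  · exact hne1 (hfin F₁ hf1 h)
  · exact hne2 (hfin F₂ hf2 h)
end

section
/- Let H be a modular hyperplane of a matroid M with complementary cocircuit C* = E(M)−H. If F is a round flat of M not contained in H, then F ⊆ cl(C*). -/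
open Set

open Matroid

private lemma my_closure_flat {α : Type*} (M : Matroid α) (X : Set α) :
    M.IsFlat (M.closure X) := by
  have h := M.subtypeClosure.isClosed_closure ⟨X ∩ M.E, inter_subset_right⟩
  rw [Matroid.isClosed_iff_isFlat] at h
  rwa [Matroid.closure_eq_subtypeClosure]

private lemma my_flat_inter {α : Type*} {M : Matroid α} {F G : Set α}
    (hF : M.IsFlat F) (hG : M.IsFlat G) : M.IsFlat (F ∩ G) := by
  have h := Matroid.IsFlat.iInter (M := M) (Fs := fun b : Bool => if b then F else G)
    (by rintro (_ | _) <;> simpa)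
  have : (⋂ b : Bool, if b then F else G) = F ∩ G := by
    ext x; simp [Bool.forall_bool, and_comm]
  rwa [this] at h

private lemma my_flat_restrict {α : Type*} {M : Matroid α} {F G : Set α}
    (hF : M.IsFlat F) (hG : M.IsFlat G) : (M ↾ F).IsFlat (F ∩ G) := by
  have hFE : F ⊆ M.E := hF.subset_ground
  refine ⟨fun I X hI hIX => ?_, by simpa using inter_subset_left⟩
  rw [Matroid.isBasis_restrict_iff hFE] at hI hIX
  exact (my_flat_inter hF hG).subset_of_isBasis_of_isBasis hI.1 hIX.1

/-- Let `H` be a modular hyperplane of `M` with complementary cocircuit `C* = E(M) − H`.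
Every round flat not contained in `H` is contained in `cl C*`. -/
theorem round_flat_subset_closure_cocircuit {α : Type*} (M : Matroid α) [M.Finite]
    (H F : Set α) (hH : M.IsHyperplane H) (hmod : M.IsModularFlat H)
    (hflat : M.IsFlat F) (hround : M.RoundSet F) (hnsub : ¬ F ⊆ H) :
    F ⊆ M.closure (M.E \ H) := by
  by_contra hcon
  refine hround.2 (F ∩ H) (F ∩ M.closure (M.E \ H)) ?_
  have hFE : F ⊆ M.E := hflat.subset_ground
  have hgr : (M ↾ F).E = F := rfl
  refine ⟨⟨my_flat_restrict hflat hH.1, ?_⟩,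
    ⟨my_flat_restrict hflat (my_closure_flat M _), ?_⟩, ?_⟩
  · rw [hgr]
    exact fun h => hnsub (by rw [← h]; exact inter_subset_right)
  · rw [hgr]
    exact fun h => hcon (by rw [← h]; exact inter_subset_right)
  · rw [hgr, ← inter_union_distrib_left]
    refine inter_eq_left.2 fun x hx => ?_
    by_cases hxH : x ∈ H
    · exact Or.inl hxH
    · exact Or.inr (M.subset_closure (M.E \ H) diff_subset ⟨hFE hx, hxH⟩)
end
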